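/- For every k ≥ 0, ‖3^k‖ = 3k for k ≥ 1 and ‖2·3^k‖ = 3k + 2; moreover 2·3^k is the largest integer whose complexity equals 3k+2. -/

import Mathlib

/-- `ExprCost n c` : there is an arithmetic expression for `n` built from the
constant `1`, addition and multiplication (and parentheses) using exactly `c` ones. -/
inductive ExprCost : ℕ → ℕ → Prop
  | one : ExprCost 1 1
  | add {a b c d : ℕ} : ExprCost a c → ExprCost b d → ExprCost (a + b) (c + d)
  | mul {a b c d : ℕ} : ExprCost a c → ExprCost b d → ExprCost (a * b) (c + d)

/-- The integer complexity `‖n‖`: the least number of `1`'s needed to write `n`. -/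
noncomputable def cpx (n : ℕ) : ℕ := sInf {c | ExprCost n c}

def E : ℕ → ℕ
  | 0 => 0
  | 1 => 1
  | 2 => 2
  | 3 => 3
  | 4 => 4
  | (n+5) => 3 * E (n+2)

lemma E_step (m : ℕ) (hm : 2 ≤ m) : E (m + 3) = 3 * E m := by
  obtain ⟨n, rfl⟩ : ∃ n, m = n + 2 := ⟨m - 2, by omega⟩
  show E (n + 5) = 3 * E (n + 2)
  simp [E]

lemma E_mono_succ : ∀ n, E n ≤ E (n + 1)
  | 0 => by decide
  | 1 => by decide
  | 2 => by decide
  | 3 => by decide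
  | 4 => by decide
  | (n+5) => by
    show E (n + 5) ≤ E (n + 6)
    have h : E (n + 2) ≤ E (n + 3) := E_mono_succ (n + 2)
    have e1 : E (n + 5) = 3 * E (n + 2) := E_step (n + 2) (by omega)
    have e2 : E (n + 6) = 3 * E (n + 3) := E_step (n + 3) (by omega)
    omega

lemma E_mono : Monotone E := monotone_nat_of_le_succ E_mono_succ

lemma E_key : ∀ s a b : ℕ, a + b = s → 1 ≤ a → 1 ≤ b →
    E a + E b ≤ E s ∧ E a * E b ≤ E s := by
  intro s
  induction s using Nat.strong_induction_on with
  | _ s ih =>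
    intro a b hab ha hb
    by_cases hs : s ≤ 9
    · subst hab
      have ha' : a ≤ 8 := by omega
      have hb' : b ≤ 8 := by omega
      interval_cases a <;> interval_cases b <;> decide
    · -- one of a, b is ≥ 5; reduce it by 3
      have key : ∀ x y : ℕ, x + y = s → 1 ≤ x → 5 ≤ y →
          E x + E y ≤ E s ∧ E x * E y ≤ E s := by
        intro x y hxy hx hy
        obtain ⟨z, rfl⟩ : ∃ z, y = z + 3 := ⟨y - 3, by omega⟩
        have hz : 2 ≤ z := by omega
        have hEy : E (z + 3) = 3 * E z := E_step z hz
        have hEs : E s = 3 * E (x + z) := by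
          have : s = (x + z) + 3 := by omega
          rw [this, E_step (x + z) (by omega)]
        obtain ⟨h1, h2⟩ := ih (x + z) (by omega) x z rfl hx (by omega)
        constructor
        · have : E x ≤ 3 * E x := by omega
          omega
        · calc E x * E (z + 3) = 3 * (E x * E z) := by rw [hEy]; ring
          _ ≤ 3 * E (x + z) := by omega
          _ = E s := hEs.symm
      rcases le_total a b with h | h
      · exact key a b hab ha (by omega)
      · obtain ⟨h1, h2⟩ := key b a (by omega) hb (by omega)
        constructor
        · omega
        · rw [mul_comm]; exact h2

lemma ExprCost.cost_pos {n c : ℕ} (h : ExprCost n c) : 1 ≤ c := by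
  induction h <;> omega

lemma ExprCost.le_E {n c : ℕ} (h : ExprCost n c) : n ≤ E c := by
  induction h with
  | one => decide
  | add ha hb iha ihb =>
    have := (E_key _ _ _ rfl ha.cost_pos hb.cost_pos).1
    omega
  | mul ha hb iha ihb =>
    have h2 := (E_key _ _ _ rfl ha.cost_pos hb.cost_pos).2
    calc _ ≤ E _ * E _ := Nat.mul_le_mul iha ihb
    _ ≤ _ := h2

lemma E_3k2 : ∀ k, E (3 * k + 2) = 2 * 3 ^ k := by
  intro k
  induction k with
  | zero => decide
  | succ k ih =>
    have h : 3 * (k + 1) + 2 = (3 * k + 2) + 3 := by ring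
    rw [h, E_step _ (by omega), ih, pow_succ]; ring

lemma E_3k1 : ∀ k, E (3 * k + 1) < 2 * 3 ^ k := by
  intro k
  induction k with
  | zero => decide
  | succ k ih =>
    rcases Nat.eq_zero_or_pos k with rfl | hk
    · decide
    · have h : 3 * (k + 1) + 1 = (3 * k + 1) + 3 := by ring
      rw [h, E_step _ (by omega), pow_succ]
      omega

lemma E_3k : ∀ k, E (3 * k) ≤ 3 ^ k := by
  intro k
  induction k with
  | zero => decide
  | succ k ih =>
    rcases Nat.eq_zero_or_pos k with rfl | hk
    · decide
    · have h : 3 * (k + 1) = 3 * k + 3 := by ring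
      rw [h, E_step _ (by omega), pow_succ]
      omega

lemma expr_three : ExprCost 3 3 :=
  ExprCost.add (ExprCost.add ExprCost.one ExprCost.one) ExprCost.one

lemma expr_pow (k : ℕ) (hk : 1 ≤ k) : ExprCost (3 ^ k) (3 * k) := by
  induction k with
  | zero => omega
  | succ k ih =>
    rcases Nat.eq_zero_or_pos k with rfl | hk'
    · simpa using expr_three
    · have : (3 : ℕ) ^ (k + 1) = 3 ^ k * 3 := by ring
      rw [this, show 3 * (k + 1) = 3 * k + 3 by ring]
      exact ExprCost.mul (ih hk') expr_three

lemma expr_two_pow (k : ℕ) : ExprCost (2 * 3 ^ k) (3 * k + 2) := by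
  induction k with
  | zero => simpa using ExprCost.add ExprCost.one ExprCost.one
  | succ k ih =>
    have h1 : 2 * 3 ^ (k + 1) = (2 * 3 ^ k) * 3 := by ring
    have h2 : 3 * (k + 1) + 2 = (3 * k + 2) + 3 := by ring
    rw [h1, h2]
    exact ExprCost.mul ih expr_three

lemma expr_self : ∀ n, 1 ≤ n → ExprCost n n
  | 0, h => by omega
  | 1, _ => ExprCost.one
  | (n+2), _ => show ExprCost ((n+1)+1) ((n+1)+1) from
      ExprCost.add (expr_self (n+1) (by omega)) ExprCost.one

lemma cpx_eq {n v : ℕ} (h1 : ExprCost n v) (h2 : ∀ c, ExprCost n c → v ≤ c) :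
    cpx n = v :=
  le_antisymm (Nat.sInf_le h1) (h2 _ (Nat.sInf_mem ⟨v, h1⟩))

theorem cpx_pow_three (k : ℕ) :
    (1 ≤ k → cpx (3 ^ k) = 3 * k) ∧ cpx (2 * 3 ^ k) = 3 * k + 2 ∧
      ∀ m : ℕ, 0 < m → cpx m = 3 * k + 2 → m ≤ 2 * 3 ^ k := by
  have pow_pos : (0:ℕ) < 3 ^ k := Nat.pow_pos (by norm_num)
  refine ⟨?_, ?_, ?_⟩
  · intro hk
    refine cpx_eq (expr_pow k hk) fun c hc => ?_
    by_contra hlt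
    have h1 : 3 ^ k ≤ E c := hc.le_E
    have h2 : E c ≤ E (3 * (k - 1) + 2) := E_mono (by omega)
    have h3 : E (3 * (k - 1) + 2) = 2 * 3 ^ (k - 1) := E_3k2 (k - 1)
    have h4 : (3:ℕ) ^ k = 3 * 3 ^ (k - 1) := by
      conv_lhs => rw [show k = (k - 1) + 1 by omega, pow_succ]
      ring
    have h5 : (0:ℕ) < 3 ^ (k - 1) := Nat.pow_pos (by norm_num)
    omega
  · refine cpx_eq (expr_two_pow k) fun c hc => ?_
    by_contra hlt
    have h1 : 2 * 3 ^ k ≤ E c := hc.le_E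
    have h2 : E c ≤ E (3 * k + 1) := E_mono (by omega)
    have h3 : E (3 * k + 1) < 2 * 3 ^ k := E_3k1 k
    omega
  · intro m hm hcpx
    have hmem : ExprCost m (cpx m) := Nat.sInf_mem ⟨m, expr_self m hm⟩
    rw [hcpx] at hmem
    have h1 : m ≤ E (3 * k + 2) := hmem.le_E
    rw [E_3k2] at h1
    exact h1
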